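/- Let S ⊆ [m]×[n] be a pattern and let M be a partial matrix subordinate to S with all specified entries nonnegative, and let Z = {(i,j) ∈ S : m_{ij} = 0}. Then M is completable to a rank-one matrix in the standard simplex Δ^{mn−1} if and only if there exist proper subsets I ⊊ [m] and J ⊊ [n] such that (1) every position in Z lies in a row of I or a column of J, (2) no position of S∖Z lies in a row of I or a column of J, and (3) the partial matrix obtained by restricting M to the positions of S contained in ([m]∖I)×([n]∖J) is completable to a rank-one matrix in the standard simplex Δ^{(m−|I|)(n−|J|)−1}. -/

import Mathlib

open Matrix Finset

lemma exists_outer {p q : Type*} [Fintype p] [Fintype q] (A : Matrix p q ℝ)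
    (hA : A.rank = 1) : ∃ u : p → ℝ, ∃ v : q → ℝ, ∀ i j, A i j = u i * v j := by
  have h1 : Module.finrank ℝ (Submodule.span ℝ (Set.range A)) = 1 := by
    rw [← hA, A.rank_eq_finrank_span_row]; rfl
  obtain ⟨v0, hv0, hall⟩ := finrank_eq_one_iff'.mp h1
  choose u hu using fun i =>
    hall ⟨A i, Submodule.subset_span (Set.mem_range_self i)⟩
  refine ⟨u, fun j => (v0 : q → ℝ) j, fun i j => ?_⟩
  have := congrArg (fun w : q → ℝ => w j) (congrArg Subtype.val (hu i))
  simpa using this.symm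

lemma rank_one_of_outer {p q : Type*} [Fintype p] [Fintype q] (A : Matrix p q ℝ)
    (u : p → ℝ) (v : q → ℝ) (h : ∀ i j, A i j = u i * v j)
    (hu : ∃ i, u i ≠ 0) (hv : ∃ j, v j ≠ 0) : A.rank = 1 := by
  obtain ⟨i0, hi0⟩ := hu
  obtain ⟨j0, hj0⟩ := hv
  have hvne : v ≠ 0 := fun hc => hj0 (by simp [hc])
  rw [A.rank_eq_finrank_span_row]
  have hspan : Submodule.span ℝ (Set.range A) = Submodule.span ℝ {v} := by
    apply le_antisymm
    · rw [Submodule.span_le]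
      rintro _ ⟨i, rfl⟩
      have : A i = u i • v := by funext j; simp [h, smul_eq_mul]
      rw [this]
      exact Submodule.smul_mem _ _ (Submodule.subset_span rfl)
    · rw [Submodule.span_le, Set.singleton_subset_iff]
      have : v = (u i0)⁻¹ • A i0 := by
        funext j; simp [h]; field_simp
      rw [this]
      exact Submodule.smul_mem _ _ (Submodule.subset_span (Set.mem_range_self i0))
  change Module.finrank ℝ (Submodule.span ℝ (Set.range A)) = 1
  rw [hspan, finrank_span_singleton hvne]

lemma struct {p q : Type*} [Fintype p] [Fintype q] (A : Matrix p q ℝ)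
    (hsum : ∑ i, ∑ j, A i j = 1) (hrank : A.rank = 1) :
    ∀ i j, A i j = (∑ j', A i j') * (∑ i', A i' j) := by
  obtain ⟨u, v, huv⟩ := exists_outer A hrank
  have htot : (∑ i, u i) * (∑ j, v j) = 1 := by
    rw [Finset.sum_mul_sum]
    simpa [huv] using hsum
  intro i j
  have hr : ∑ j', A i j' = u i * ∑ j', v j' := by
    simp [huv, Finset.mul_sum]
  have hc : ∑ i', A i' j = (∑ i', u i') * v j := by
    simp [huv, Finset.sum_mul]
  rw [hr, hc, huv]
  linear_combination (-(u i * v j)) * htot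


/-- A partial matrix with nonnegative specified entries is completable to a rank-one
matrix in the standard simplex iff there are proper sets of rows `I` and columns `J`
covering all zero entries, avoiding all nonzero specified entries, such that the
restriction to the remaining rows and columns is completable to a rank-one matrix in
the corresponding standard simplex. -/
theorem completable_with_zeros_iff (m n : ℕ) (S : Set (Fin m × Fin n))
    (f : Fin m → Fin n → ℝ) (hf : ∀ p ∈ S, 0 ≤ f p.1 p.2) :
    (∃ M : Matrix (Fin m) (Fin n) ℝ,
      (∀ i j, 0 ≤ M i j) ∧ (∑ i, ∑ j, M i j = 1) ∧ M.rank = 1 ∧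
      ∀ p ∈ S, M p.1 p.2 = f p.1 p.2) ↔
    (∃ I : Finset (Fin m), ∃ J : Finset (Fin n),
      I ≠ Finset.univ ∧ J ≠ Finset.univ ∧
      (∀ p ∈ S, f p.1 p.2 = 0 → p.1 ∈ I ∨ p.2 ∈ J) ∧
      (∀ p ∈ S, f p.1 p.2 ≠ 0 → p.1 ∉ I ∧ p.2 ∉ J) ∧
      (∃ N : Matrix ↥(Iᶜ : Finset (Fin m)) ↥(Jᶜ : Finset (Fin n)) ℝ,
        (∀ i j, 0 ≤ N i j) ∧ (∑ i, ∑ j, N i j = 1) ∧ N.rank = 1 ∧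
        ∀ (i : ↥(Iᶜ : Finset (Fin m))) (j : ↥(Jᶜ : Finset (Fin n))),
          ((i : Fin m), (j : Fin n)) ∈ S → N i j = f i j)) := by
  classical
  constructor
  · rintro ⟨M, hMpos, hMsum, hMrank, hMmatch⟩
    have key : ∀ i j, M i j = (∑ j', M i j') * (∑ i', M i' j) := struct M hMsum hMrank
    set r : Fin m → ℝ := fun i => ∑ j, M i j with hrdef
    set c : Fin n → ℝ := fun j => ∑ i, M i j with hcdef
    have hrsum : ∑ i, r i = 1 := hMsum
    have hcsum : ∑ j, c j = 1 := by
      rw [hcdef]; rw [Finset.sum_comm]; exact hMsum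
    set I : Finset (Fin m) := Finset.univ.filter (fun i => r i = 0) with hIdef
    set J : Finset (Fin n) := Finset.univ.filter (fun j => c j = 0) with hJdef
    have hmemIc : ∀ i : Fin m, i ∈ Iᶜ ↔ r i ≠ 0 := by
      intro i; simp [hIdef, Finset.mem_compl]
    have hmemJc : ∀ j : Fin n, j ∈ Jᶜ ↔ c j ≠ 0 := by
      intro j; simp [hJdef, Finset.mem_compl]
    have hMzero : ∀ i j, (r i = 0 ∨ c j = 0) → M i j = 0 := by
      intro i j hij
      rw [key i j]
      rcases hij with h | h
      · rw [show (∑ j', M i j') = r i from rfl, h, zero_mul]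
      · rw [show (∑ i', M i' j) = c j from rfl, h, mul_zero]
    have hIne : I ≠ Finset.univ := by
      intro hIu
      have : ∑ i, r i = 0 := Finset.sum_eq_zero fun i _ => by
        have : i ∈ I := hIu ▸ Finset.mem_univ i
        simpa [hIdef] using this
      rw [hrsum] at this; exact one_ne_zero this
    have hJne : J ≠ Finset.univ := by
      intro hJu
      have : ∑ j, c j = 0 := Finset.sum_eq_zero fun j _ => by
        have : j ∈ J := hJu ▸ Finset.mem_univ j
        simpa [hJdef] using this
      rw [hcsum] at this; exact one_ne_zero this
    have hIcne : (Iᶜ : Finset (Fin m)).Nonempty :=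
      (Finset.compl_ne_univ_iff_nonempty (Iᶜ)).mp (by simpa using hIne)
    have hJcne : (Jᶜ : Finset (Fin n)).Nonempty :=
      (Finset.compl_ne_univ_iff_nonempty (Jᶜ)).mp (by simpa using hJne)
    refine ⟨I, J, hIne, hJne, ?_, ?_, ?_⟩
    · intro p hp hfz
      have hM0 : M p.1 p.2 = 0 := (hMmatch p hp).trans hfz
      rw [key] at hM0
      rcases mul_eq_zero.mp hM0 with h | h
      · left; simp [hIdef]; exact h
      · right; simp [hJdef]; exact h
    · intro p hp hfnz
      have hM0 : M p.1 p.2 ≠ 0 := by rw [hMmatch p hp]; exact hfnz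
      constructor
      · intro hmem
        exact hM0 (hMzero _ _ (Or.inl (by simpa [hIdef] using hmem)))
      · intro hmem
        exact hM0 (hMzero _ _ (Or.inr (by simpa [hJdef] using hmem)))
    · refine ⟨Matrix.of (fun i j => M i j), fun i j => hMpos _ _, ?_, ?_, ?_⟩
      · have hrow : ∀ i : Fin m, ∑ j ∈ Jᶜ, M i j = r i := by
          intro i
          rw [hrdef]
          apply Finset.sum_subset (Finset.subset_univ _)
          intro j _ hj
          have hjJ : c j = 0 := by
            by_contra hc0
            exact hj ((hmemJc j).mpr hc0)
          exact hMzero i j (Or.inr hjJ)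
        calc ∑ i : ↥(Iᶜ : Finset (Fin m)), ∑ j : ↥(Jᶜ : Finset (Fin n)), M i j
            = ∑ i ∈ Iᶜ, ∑ j ∈ Jᶜ, M i j := by
              rw [← Finset.sum_coe_sort (Iᶜ) (fun i => ∑ j ∈ Jᶜ, M i j)]
              congr 1; funext i
              rw [← Finset.sum_coe_sort (Jᶜ) (fun j => M i j)]
          _ = ∑ i ∈ Iᶜ, r i := by
              apply Finset.sum_congr rfl; intro i _; exact hrow i
          _ = ∑ i, r i := by
              apply Finset.sum_subset (Finset.subset_univ _)
              intro i _ hi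
              by_contra hr0
              exact hi ((hmemIc i).mpr hr0)
          _ = 1 := hrsum
      · apply rank_one_of_outer _ (fun i : ↥(Iᶜ : Finset (Fin m)) => r i)
          (fun j : ↥(Jᶜ : Finset (Fin n)) => c j)
        · intro i j; exact key i j
        · obtain ⟨i0, hi0⟩ := hIcne
          exact ⟨⟨i0, hi0⟩, (hmemIc i0).mp hi0⟩
        · obtain ⟨j0, hj0⟩ := hJcne
          exact ⟨⟨j0, hj0⟩, (hmemJc j0).mp hj0⟩
      · intro i j hS
        exact hMmatch (↑i, ↑j) hS
  · rintro ⟨I, J, hI, hJ, hzero, hnonzero, N, hNpos, hNsum, hNrank, hNmatch⟩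
    set R : ↥(Iᶜ : Finset (Fin m)) → ℝ := fun i => ∑ j, N i j with hRdef
    set C : ↥(Jᶜ : Finset (Fin n)) → ℝ := fun j => ∑ i, N i j with hCdef
    have key : ∀ i j, N i j = R i * C j := struct N hNsum hNrank
    have hRsum : ∑ i, R i = 1 := hNsum
    have hCsum : ∑ j, C j = 1 := by
      rw [hCdef]; rw [Finset.sum_comm]; exact hNsum
    have hRpos : ∀ i, 0 ≤ R i := fun i => Finset.sum_nonneg fun j _ => hNpos i j
    have hCpos : ∀ j, 0 ≤ C j := fun j => Finset.sum_nonneg fun i _ => hNpos i j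
    set U : Fin m → ℝ := fun i => if h : i ∈ (Iᶜ : Finset (Fin m)) then R ⟨i, h⟩ else 0 with hUdef
    set V : Fin n → ℝ := fun j => if h : j ∈ (Jᶜ : Finset (Fin n)) then C ⟨j, h⟩ else 0 with hVdef
    have hUpos : ∀ i, 0 ≤ U i := by
      intro i; rw [hUdef]; dsimp only
      split
      · exact hRpos _
      · exact le_refl 0
    have hVpos : ∀ j, 0 ≤ V j := by
      intro j; rw [hVdef]; dsimp only
      split
      · exact hCpos _
      · exact le_refl 0
    have hUsum : ∑ i, U i = 1 := by
      calc ∑ i, U i = ∑ i ∈ Iᶜ, U i := by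
            symm
            apply Finset.sum_subset (Finset.subset_univ _)
            intro i _ hi
            rw [hUdef]; exact dif_neg hi
        _ = ∑ i : ↥(Iᶜ : Finset (Fin m)), U ↑i := (Finset.sum_coe_sort _ _).symm
        _ = ∑ i : ↥(Iᶜ : Finset (Fin m)), R i := by
            apply Finset.sum_congr rfl
            intro i _
            rw [hUdef]; exact dif_pos i.2
        _ = 1 := hRsum
    have hVsum : ∑ j, V j = 1 := by
      calc ∑ j, V j = ∑ j ∈ Jᶜ, V j := by
            symm
            apply Finset.sum_subset (Finset.subset_univ _)
            intro j _ hj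
            rw [hVdef]; exact dif_neg hj
        _ = ∑ j : ↥(Jᶜ : Finset (Fin n)), V ↑j := (Finset.sum_coe_sort _ _).symm
        _ = ∑ j : ↥(Jᶜ : Finset (Fin n)), C j := by
            apply Finset.sum_congr rfl
            intro j _
            rw [hVdef]; exact dif_pos j.2
        _ = 1 := hCsum
    refine ⟨Matrix.of (fun i j => U i * V j), fun i j => mul_nonneg (hUpos i) (hVpos j), ?_, ?_, ?_⟩
    · calc ∑ i, ∑ j, U i * V j = (∑ i, U i) * (∑ j, V j) := by
            rw [Finset.sum_mul_sum]
        _ = 1 := by rw [hUsum, hVsum, one_mul]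
    · apply rank_one_of_outer _ U V (fun i j => rfl)
      · by_contra hc
        push_neg at hc
        have : ∑ i, U i = 0 := Finset.sum_eq_zero fun i _ => hc i
        rw [hUsum] at this; exact one_ne_zero this
      · by_contra hc
        push_neg at hc
        have : ∑ j, V j = 0 := Finset.sum_eq_zero fun j _ => hc j
        rw [hVsum] at this; exact one_ne_zero this
    · intro p hp
      by_cases hfp : f p.1 p.2 = 0
      · rcases hzero p hp hfp with h | h
        · have hU0 : U p.1 = 0 := by
            rw [hUdef]; exact dif_neg (by simpa [Finset.mem_compl] using h)
          simp [Matrix.of_apply, hU0, hfp]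
        · have hV0 : V p.2 = 0 := by
            rw [hVdef]; exact dif_neg (by simpa [Finset.mem_compl] using h)
          simp [Matrix.of_apply, hV0, hfp]
      · obtain ⟨h1, h2⟩ := hnonzero p hp hfp
        have h1' : p.1 ∈ (Iᶜ : Finset (Fin m)) := Finset.mem_compl.mpr h1
        have h2' : p.2 ∈ (Jᶜ : Finset (Fin n)) := Finset.mem_compl.mpr h2
        have hU : U p.1 = R ⟨p.1, h1'⟩ := by rw [hUdef]; exact dif_pos h1'
        have hV : V p.2 = C ⟨p.2, h2'⟩ := by rw [hVdef]; exact dif_pos h2'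
        have hmem : (((⟨p.1, h1'⟩ : ↥(Iᶜ : Finset (Fin m))) : Fin m),
            ((⟨p.2, h2'⟩ : ↥(Jᶜ : Finset (Fin n))) : Fin n)) ∈ S := by
          simpa using hp
        have := hNmatch ⟨p.1, h1'⟩ ⟨p.2, h2'⟩ hmem
        rw [key] at this
        show U p.1 * V p.2 = f p.1 p.2
        rw [hU, hV, this]
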